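/- (Reformulation of signs used in the Wick expansion, eq. (sign_reform).) Let M_ref and M₀ be directed pairings on a finite set S with 2p elements, let D ∈ ℕ, and let E be any directed pairing on S × Fin D. Then ε(M_ref^{(D)}, E) · ε(M_ref, M₀)^D = ε(M₀^{(D)}, E), where M^{(D)} denotes the D-fold disjoint copy of M on S × Fin D given by the pairs (((M i).1, d), ((M i).2, d)). -/

import Mathlib

/-- The listing function of a candidate directed pairing `M : Fin n → S × S`:
it sends `(i, 0)` to the first element of the `i`-th pair and `(i, 1)` to the second. -/
def pairingListing {S : Type*} {n : ℕ} (M : Fin n → S × S) : Fin n × Fin 2 → S :=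
  fun p => if p.2 = 0 then (M p.1).1 else (M p.1).2

/-- `M : Fin n → S × S` is a directed pairing on `S` if its `2n` components are
pairwise distinct and exhaust `S`, i.e. its listing function is a bijection. -/
def IsDirectedPairing {S : Type*} {n : ℕ} (M : Fin n → S × S) : Prop :=
  Function.Bijective (pairingListing M)

/-- The bijection `fl_M : Fin n × Fin 2 ≃ S` induced by a directed pairing. -/
noncomputable def pairingFlatten {S : Type*} {n : ℕ} {M : Fin n → S × S}
    (h : IsDirectedPairing M) : Fin n × Fin 2 ≃ S :=
  Equiv.ofBijective _ h

/-- The sign `ε(M₁, M₂)` of two directed pairings on the same finite set `S`: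
the sign of the permutation `fl_{M₂} ∘ fl_{M₁}⁻¹` of `S`. -/
noncomputable def pairingSign {S : Type*} [Fintype S] [DecidableEq S] {n : ℕ}
    {M₁ M₂ : Fin n → S × S} (h₁ : IsDirectedPairing M₁) (h₂ : IsDirectedPairing M₂) : ℤˣ :=
  Equiv.Perm.sign ((pairingFlatten h₁).symm.trans (pairingFlatten h₂))

/-- The `D`-fold disjoint copy of a directed pairing `M` on `S`, as a directed pairing
on `S × Fin D`: its pairs are `(((M i).1, d), ((M i).2, d))` for `i : Fin n`, `d : Fin D`. -/
def copyPairing {S : Type*} {n : ℕ} (D : ℕ) (M : Fin n → S × S) :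
    Fin (n * D) → (S × Fin D) × (S × Fin D) :=
  fun i =>
    let p := finProdFinEquiv.symm i
    (((M p.1).1, p.2), ((M p.1).2, p.2))

/-- The rearranging equivalence `Fin (n*D) × Fin 2 ≃ (Fin n × Fin 2) × Fin D`. -/
def copyRearrange (n D : ℕ) : Fin (n * D) × Fin 2 ≃ (Fin n × Fin 2) × Fin D :=
  (finProdFinEquiv.symm.prodCongr (Equiv.refl (Fin 2))).trans
    ((Equiv.prodAssoc _ _ _).trans
      (((Equiv.refl (Fin n)).prodCongr (Equiv.prodComm _ _)).trans
        (Equiv.prodAssoc _ _ _).symm))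

theorem pairingFlatten_copy {S : Type*} {n : ℕ} (D : ℕ) {M : Fin n → S × S}
    (h : IsDirectedPairing M) (hc : IsDirectedPairing (copyPairing D M)) :
    pairingFlatten hc =
      (copyRearrange n D).trans ((pairingFlatten h).prodCongr (Equiv.refl (Fin D))) := by
  refine Equiv.ext fun x => ?_
  obtain ⟨i, b⟩ := x
  simp only [pairingFlatten, Equiv.ofBijective_apply, Equiv.trans_apply, copyRearrange,
    Equiv.prodCongr_apply, Equiv.coe_refl, Prod.map, Equiv.prodAssoc_apply,
    Equiv.prodAssoc_symm_apply, Equiv.prodComm_apply, Prod.swap]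
  rcases Fin.exists_fin_two.mp ⟨b, rfl⟩ with hb | hb <;>
    simp [pairingListing, copyPairing, hb, Equiv.ofBijective]

/-- Reformulation of signs used in the Wick expansion:
`ε(M_ref^{(D)}, E) · ε(M_ref, M₀)^D = ε(M₀^{(D)}, E)` for any directed pairing `E`
on `S × Fin D`. -/
theorem pairingSign_wick_reform {S : Type*} [Fintype S] [DecidableEq S] {p : ℕ} (D : ℕ)
    (Mref M₀ : Fin p → S × S) (E : Fin (p * D) → (S × Fin D) × (S × Fin D))
    (href : IsDirectedPairing Mref) (h₀ : IsDirectedPairing M₀)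
    (hE : IsDirectedPairing E)
    (hcref : IsDirectedPairing (copyPairing D Mref))
    (hc₀ : IsDirectedPairing (copyPairing D M₀)) :
    pairingSign hcref hE * (pairingSign href h₀) ^ D = pairingSign hc₀ hE := by
  have key : (pairingFlatten hc₀).symm.trans (pairingFlatten hE) =
      ((pairingFlatten hc₀).symm.trans (pairingFlatten hcref)).trans
        ((pairingFlatten hcref).symm.trans (pairingFlatten hE)) := by
    refine Equiv.ext fun x => by simp
  have hmid : (pairingFlatten hc₀).symm.trans (pairingFlatten hcref) =
      (((pairingFlatten h₀).symm.trans (pairingFlatten href)).prodCongr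
        (Equiv.refl (Fin D))) := by
    rw [pairingFlatten_copy D h₀ hc₀, pairingFlatten_copy D href hcref]
    refine Equiv.ext fun x => ?_
    simp [Prod.map]
  have hsign : Equiv.Perm.sign
      ((((pairingFlatten h₀).symm.trans (pairingFlatten href)).prodCongr
        (Equiv.refl (Fin D))) : Equiv.Perm (S × Fin D)) =
      (pairingSign href h₀) ^ D := by
    rw [Equiv.prodCongr_refl_right, Equiv.Perm.sign_prodCongrLeft]
    have : Equiv.Perm.sign ((pairingFlatten h₀).symm.trans (pairingFlatten href)) =
        pairingSign href h₀ := by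
      have : ((pairingFlatten h₀).symm.trans (pairingFlatten href)) =
          ((pairingFlatten href).symm.trans (pairingFlatten h₀))⁻¹ := by
        refine Equiv.ext fun x => by simp [Equiv.Perm.inv_def]
      rw [this, Equiv.Perm.sign_inv]; rfl
    simp [this]
  conv_rhs => rw [pairingSign, key]
  rw [Equiv.Perm.sign_trans, hmid, hsign, pairingSign, mul_comm]
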